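/- There is a constant C_d > 0 such that for all n ≥ 2, all x ∈ ℝ^d and all t > 0, one has (1 - |x|²/(2nt))^{(n-2)/2} · 1_{|x|² < 2nt} ≤ C_d · e^{-|x|²/(4t)}. -/
import Mathlib


/-- There is `C_d > 0` such that for all `n ≥ 2`, `x ∈ ℝ^d`, `t > 0`,
`(1 - |x|²/(2nt))^((n-2)/2) · 1_{|x|² < 2nt} ≤ C_d · e^{-|x|²/(4t)}`. -/
theorem stmt5 (d : ℕ) :
    ∃ C : ℝ, 0 < C ∧ ∀ n : ℕ, 2 ≤ n → ∀ x : EuclideanSpace ℝ (Fin d), ∀ t : ℝ, 0 < t →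
      (if ‖x‖ ^ 2 < 2 * n * t then
          (1 - ‖x‖ ^ 2 / (2 * n * t)) ^ (((n : ℝ) - 2) / 2) else 0)
        ≤ C * Real.exp (-‖x‖ ^ 2 / (4 * t)) := by
  refine ⟨Real.exp 1, Real.exp_pos 1, ?_⟩
  intro n hn x t ht
  set s := ‖x‖ ^ 2 with hs
  have hs0 : 0 ≤ s := by positivity
  have hn0 : (0:ℝ) < (n:ℝ) := by
    have : (2:ℝ) ≤ (n:ℝ) := by exact_mod_cast hn
    linarith
  split_ifs with h
  · have hnt : (0:ℝ) < 2 * n * t := by positivity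
    have hu1 : s / (2 * n * t) < 1 := (div_lt_one hnt).2 h
    have hu0 : 0 ≤ s / (2 * n * t) := div_nonneg hs0 hnt.le
    have hp : (0:ℝ) ≤ ((n:ℝ) - 2) / 2 := by
      have : (2:ℝ) ≤ (n:ℝ) := by exact_mod_cast hn
      linarith
    have h1 : 1 - s / (2*n*t) ≤ Real.exp (-(s / (2*n*t))) := by
      have := Real.add_one_le_exp (-(s/(2*n*t))); linarith
    have h2 : (1 - s/(2*n*t)) ^ (((n:ℝ)-2)/2) ≤
        (Real.exp (-(s/(2*n*t)))) ^ (((n:ℝ)-2)/2) :=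
      Real.rpow_le_rpow (by linarith) h1 hp
    have h3 : (Real.exp (-(s/(2*n*t)))) ^ (((n:ℝ)-2)/2) =
        Real.exp (-(s/(2*n*t)) * (((n:ℝ)-2)/2)) := by
      rw [← Real.exp_mul]
    have hkey : -(s/(2*n*t)) * (((n:ℝ)-2)/2) = s/(2*n*t) - s/(4*t) := by
      field_simp
      ring
    have h4 : Real.exp (-(s/(2*n*t)) * (((n:ℝ)-2)/2)) ≤
        Real.exp (1 + -s/(4*t)) := by
      apply Real.exp_le_exp.2
      rw [hkey]
      have : s/(2*n*t) ≤ 1 := hu1.le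
      have : -s/(4*t) = -(s/(4*t)) := by ring
      linarith [hu1.le]
    calc (1 - s/(2*n*t)) ^ (((n:ℝ)-2)/2) ≤ Real.exp (1 + -s/(4*t)) := by
          rw [← h3.symm] at h2; exact h2.trans (h3 ▸ h4)
      _ = Real.exp 1 * Real.exp (-s/(4*t)) := Real.exp_add _ _
  · positivity
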